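/- Let n_2/n_1 be a rational number with n_1, n_2 coprime positive integers, n_2 < n_1, n_1 > 1, with finite continued fraction expansion [a_0; a_1, …, a_L] and associated Euclidean remainders n_1 > n_2 > n_3 > … > n_{L+1} = 1, and let r_0 be a real number with continued fraction expansion [b_0; b_1, …] and remainders r_1, r_2, …. Set d_i = r_i − n_{i+2}/n_{i+1}. Suppose k is a nonnegative integer with k < L and a_i = b_i for all i ≤ k. Then: (i) if k < L−1 and |d_k| < 1/(n_{k+1}(n_{k+1}−1)), then a_{k+1} = b_{k+1}; (ii) if k = L−1 and |d_{L−1}| < 1/(n_L(n_L+1)), then b_L = a_L or b_L = a_L − 1. -/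

import Mathlib

/-- The remainders `r_0, r_1, r_2, …` of the continued fraction algorithm
applied to a real number `r`: `r_0 = r - ⌊r⌋` and `r_{i+1} = 1/r_i - ⌊1/r_i⌋`. -/
noncomputable def cfRem (r : ℝ) : ℕ → ℝ
  | 0 => Int.fract r
  | i + 1 => Int.fract (cfRem r i)⁻¹

/-- The partial quotients `b_0, b_1, b_2, …` of the continued fraction
expansion of a real number `r`: `b_0 = ⌊r⌋` and `b_{i+1} = ⌊1/r_i⌋`. -/
noncomputable def cfB (r : ℝ) : ℕ → ℤ
  | 0 => ⌊r⌋
  | i + 1 => ⌊(cfRem r i)⁻¹⌋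

set_option maxHeartbeats 1000000 in
/-- Lemma 2: let `n 2 / n 1` be a rational number with coprime positive
numerator and denominator, `n 2 < n 1`, `n 1 > 1`, whose continued fraction
expansion (produced by the Euclidean algorithm, with remainders
`n 1 > n 2 > … > n (L+1) = 1 > n (L+2) = 0`) is `[a 0; a 1, …, a L]`, and let
`r` be a real approximation with partial quotients `b i = cfB r i` and
remainders `r_i = cfRem r i`.  Write `d i = r_i − n (i+2) / n (i+1)`.
If `a i = b i` for all `i ≤ k` with `k < L`, then:
(i) if `k < L − 1` and `|d k| < 1/(n (k+1) (n (k+1) − 1))`, then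
`a (k+1) = b (k+1)`;
(ii) if `k = L − 1` and `|d (L−1)| < 1/(n L (n L + 1))`, then
`b L = a L` or `b L = a L − 1`. -/
theorem stmt_3 (L : ℕ) (hL : 1 ≤ L) (n a : ℕ → ℤ) (r : ℝ)
    (hn1 : 1 < n 1) (hn2 : 0 < n 2) (h21 : n 2 < n 1)
    (hcop : Int.gcd (n 2) (n 1) = 1)
    (hdec : ∀ k, 1 ≤ k → k ≤ L + 1 → n (k + 1) < n k)
    (hlast : n (L + 1) = 1) (hlast2 : n (L + 2) = 0)
    (heuclid : ∀ k, 1 ≤ k → k ≤ L → n k = a k * n (k + 1) + n (k + 2))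
    (ha0 : a 0 = 0)
    (haCF : ∀ i, i ≤ L → a i = cfB ((n 2 : ℝ) / (n 1 : ℝ)) i)
    (k : ℕ) (hkL : k < L)
    (hab : ∀ i, i ≤ k → a i = cfB r i) :
    (k + 1 < L →
      |cfRem r k - (n (k + 2) : ℝ) / (n (k + 1) : ℝ)| <
        1 / ((n (k + 1) : ℝ) * ((n (k + 1) : ℝ) - 1)) →
      a (k + 1) = cfB r (k + 1)) ∧
    (k + 1 = L →
      |cfRem r k - (n (k + 2) : ℝ) / (n (k + 1) : ℝ)| <
        1 / ((n (k + 1) : ℝ) * ((n (k + 1) : ℝ) + 1)) →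
      cfB r L = a L ∨ cfB r L = a L - 1) := by

  have hmono : ∀ j, j ≤ L + 1 → ∀ i, 1 ≤ i → i ≤ j → n j ≤ n i := by
    intro j
    induction j with
    | zero => intro _ i h1 hij; omega
    | succ m ih =>
      intro hj i h1 hij
      rcases Nat.lt_or_ge i (m + 1) with h | h
      · have him : i ≤ m := by omega
        have h1m : 1 ≤ m := le_trans h1 him
        have hd := hdec m h1m (by omega)
        have hi := ih (by omega) i h1 him
        omega
      · have : i = m + 1 := by omega
        rw [this]
  have npos : ∀ j, 1 ≤ j → j ≤ L + 1 → 1 ≤ n j := by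
    intro j h1 hj
    have := hmono (L + 1) le_rfl j h1 hj
    omega
  have hcfB : ∀ i : ℕ, cfB r (i + 1) = ⌊(cfRem r i)⁻¹⌋ := fun i => rfl
  constructor
  · -- case (i): k + 1 < L
    intro hk1 habs
    have hs1 : 1 ≤ n (k + 3) := npos (k + 3) (by omega) (by omega)
    have hsq : n (k + 3) < n (k + 2) := by
      have h := hdec (k + 2) (by omega) (by omega)
      have e : k + 2 + 1 = k + 3 := by omega
      rw [e] at h; exact h
    have hqp : n (k + 2) < n (k + 1) := by
      have h := hdec (k + 1) (by omega) (by omega)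
      have e : k + 1 + 1 = k + 2 := by omega
      rw [e] at h; exact h
    have heq : n (k + 1) = a (k + 1) * n (k + 2) + n (k + 3) := by
      have h := heuclid (k + 1) (by omega) (by omega)
      have e1 : k + 1 + 1 = k + 2 := by omega
      have e2 : k + 1 + 2 = k + 3 := by omega
      rw [e1, e2] at h; exact h
    have hq2 : 2 ≤ n (k + 2) := by omega
    have hp3 : 3 ≤ n (k + 1) := by omega
    have hA1 : 1 ≤ a (k + 1) := by nlinarith [heq, hs1, hsq, hqp, hq2]
    have hA2 : a (k + 1) ≤ n (k + 1) - 2 := by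
      nlinarith [heq, hs1, hq2, hp3, mul_nonneg (by linarith : (0:ℤ) ≤ a (k + 1) - 1) (by linarith : (0:ℤ) ≤ n (k + 2) - 2)]
    have int1 : a (k + 1) * (n (k + 2) * (n (k + 1) - 1) + 1) ≤ n (k + 1) * (n (k + 1) - 1) := by
      nlinarith [heq, hs1, hA1, hA2, hp3,
        mul_nonneg (by linarith : (0:ℤ) ≤ n (k + 3) - 1) (by linarith : (0:ℤ) ≤ n (k + 1) - 1)]
    have int2 : n (k + 1) * (n (k + 1) - 1) ≤ (a (k + 1) + 1) * (n (k + 2) * (n (k + 1) - 1) - 1) := by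
      nlinarith [heq, hs1, hA1, hA2, hp3, hsq,
        mul_nonneg (by linarith : (0:ℤ) ≤ n (k + 2) - n (k + 3) - 1) (by linarith : (0:ℤ) ≤ n (k + 1) - 1)]
    -- pass to the reals
    have hP3 : (3:ℝ) ≤ (n (k + 1) : ℝ) := by exact_mod_cast hp3
    have hQ2 : (2:ℝ) ≤ (n (k + 2) : ℝ) := by exact_mod_cast hq2
    have hA1' : (1:ℝ) ≤ (a (k + 1) : ℝ) := by exact_mod_cast hA1
    have rint1 : (a (k + 1) : ℝ) * ((n (k + 2) : ℝ) * ((n (k + 1) : ℝ) - 1) + 1) ≤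
        (n (k + 1) : ℝ) * ((n (k + 1) : ℝ) - 1) := by exact_mod_cast int1
    have rint2 : (n (k + 1) : ℝ) * ((n (k + 1) : ℝ) - 1) ≤
        ((a (k + 1) : ℝ) + 1) * ((n (k + 2) : ℝ) * ((n (k + 1) : ℝ) - 1) - 1) := by
      exact_mod_cast int2
    set P : ℝ := (n (k + 1) : ℝ) with hPdef
    set Q : ℝ := (n (k + 2) : ℝ) with hQdef
    set A : ℝ := (a (k + 1) : ℝ) with hAdef
    set y : ℝ := cfRem r k with hydef
    have hPP : (0:ℝ) < P * (P - 1) := by nlinarith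
    have hPpos : (0:ℝ) < P := by linarith
    rw [abs_lt] at habs
    obtain ⟨hlb, hub⟩ := habs
    have hup : y * (P * (P - 1)) < Q * (P - 1) + 1 := by
      have h := mul_lt_mul_of_pos_right (by linarith : y < Q / P + 1 / (P * (P - 1))) hPP
      calc y * (P * (P - 1)) < (Q / P + 1 / (P * (P - 1))) * (P * (P - 1)) := h
        _ = Q * (P - 1) + 1 := by have hP1 : P - 1 ≠ 0 := (by linarith); field_simp
    have hlo : Q * (P - 1) - 1 < y * (P * (P - 1)) := by
      have h := mul_lt_mul_of_pos_right (by linarith : Q / P - 1 / (P * (P - 1)) < y) hPP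
      calc Q * (P - 1) - 1 = (Q / P - 1 / (P * (P - 1))) * (P * (P - 1)) := by have hP1 : P - 1 ≠ 0 := (by linarith); field_simp
        _ < y * (P * (P - 1)) := h
    have hy : 0 < y := by nlinarith [hlo, hPP, hQ2, hP3]
    have hfl : ⌊y⁻¹⌋ = a (k + 1) := by
      rw [Int.floor_eq_iff]
      constructor
      · rw [← hAdef, inv_eq_one_div, le_div_iff₀ hy]
        nlinarith [mul_lt_mul_of_pos_left hup (by linarith : (0:ℝ) < A), rint1, hPP]
      · rw [← hAdef, inv_eq_one_div, div_lt_iff₀ hy]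
        nlinarith [mul_lt_mul_of_pos_left hlo (by linarith : (0:ℝ) < A + 1), rint2, hPP]
    rw [hcfB k, hfl]
  · -- case (ii): k + 1 = L
    intro hkLeq habs
    subst hkLeq
    have e1 : k + 1 + 1 = k + 2 := by omega
    have e2 : k + 1 + 2 = k + 3 := by omega
    rw [e1] at hlast
    rw [e2] at hlast2
    have hp2 : 2 ≤ n (k + 1) := by
      have h := hdec (k + 1) (by omega) (by omega)
      rw [e1] at h
      omega
    have haL : a (k + 1) = n (k + 1) := by
      have h := heuclid (k + 1) (by omega) (by omega)
      rw [e1, e2, hlast, hlast2] at h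
      omega
    have hP2 : (2:ℝ) ≤ (n (k + 1) : ℝ) := by exact_mod_cast hp2
    rw [hlast] at habs
    push_cast at habs
    set P : ℝ := (n (k + 1) : ℝ) with hPdef
    set y : ℝ := cfRem r k with hydef
    have hPpos : (0:ℝ) < P := by linarith
    have hPP : (0:ℝ) < P * (P + 1) := by nlinarith
    rw [abs_lt] at habs
    obtain ⟨hlb, hub⟩ := habs
    have hup : y * (P * (P + 1)) < P + 2 := by
      have h := mul_lt_mul_of_pos_right (by linarith : y < 1 / P + 1 / (P * (P + 1))) hPP
      calc y * (P * (P + 1)) < (1 / P + 1 / (P * (P + 1))) * (P * (P + 1)) := h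
        _ = P + 2 := by field_simp; ring
    have hlo : P < y * (P * (P + 1)) := by
      have h := mul_lt_mul_of_pos_right (by linarith : 1 / P - 1 / (P * (P + 1)) < y) hPP
      calc P = (1 / P - 1 / (P * (P + 1))) * (P * (P + 1)) := by field_simp; ring
        _ < y * (P * (P + 1)) := h
    have hy : 0 < y := by nlinarith [hlo, hPP, hP2]
    have h1 : y⁻¹ < P + 1 := by
      rw [inv_eq_one_div, div_lt_iff₀ hy]
      nlinarith [hlo, hPpos]
    have h2 : P - 1 < y⁻¹ := by
      rw [inv_eq_one_div, lt_div_iff₀ hy]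
      nlinarith [mul_lt_mul_of_pos_left hup (by linarith : (0:ℝ) < P - 1), hPP]
    have hf1 : (⌊y⁻¹⌋ : ℝ) ≤ y⁻¹ := Int.floor_le _
    have hf2 : y⁻¹ < (⌊y⁻¹⌋ : ℝ) + 1 := Int.lt_floor_add_one _
    have hi1 : ⌊y⁻¹⌋ < n (k + 1) + 1 := by
      have h : (⌊y⁻¹⌋ : ℝ) < P + 1 := lt_of_le_of_lt hf1 h1
      rw [hPdef] at h
      exact_mod_cast h
    have hi2 : n (k + 1) - 2 < ⌊y⁻¹⌋ := by
      have h : P - 2 < (⌊y⁻¹⌋ : ℝ) := by linarith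
      rw [hPdef] at h
      exact_mod_cast h
    rw [hcfB k, ← hydef]
    omega
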